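/- arXiv:1903.09050 — 4 statements merged into one kernel-verified Lean document; each statement's English description precedes it below -/
import Mathlib

section
/- There exists a constant C depending only on d with the following property. Let q be a prime power with gcd(q, 2d) = 1 and let f(T) be a monic polynomial of degree d over F_q with f'' ≠ 0. Then for all but at most C values of s ∈ F_q, the polynomial f(T) + sT is a Morse polynomial. -/
open Polynomial
open scoped Classical

noncomputable section

/-- `f` is a Morse polynomial: its derivative has exactly `deg f - 1` distinct roots in the
algebraic closure, and the values of `f` at these roots are pairwise distinct. -/
def IsMorse {F : Type*} [Field F] (f : Polynomial F) : Prop :=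
  (Polynomial.roots (Polynomial.derivative
      (f.map (algebraMap F (AlgebraicClosure F))))).toFinset.card = f.natDegree - 1 ∧
  Set.InjOn (fun α => Polynomial.eval α (f.map (algebraMap F (AlgebraicClosure F))))
    ((Polynomial.roots (Polynomial.derivative
        (f.map (algebraMap F (AlgebraicClosure F))))).toFinset : Set (AlgebraicClosure F))

namespace MorseAux

section Syl

variable {S : Type*} [CommRing S]

lemma degree_C_mul_le' (a : S) (p : S[X]) : (C a * p).degree ≤ p.degree := by
  refine le_trans (degree_mul_le _ _) ?_
  have h0 : (C a).degree + p.degree ≤ 0 + p.degree := add_le_add degree_C_le le_rfl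
  simpa using h0

/-- The `j`-th column polynomial of the Sylvester-type matrix for `A, B`. -/
def sylCol (A B : S[X]) (m n : ℕ) (j : Fin (m + n)) : S[X] :=
  if (j : ℕ) < n then A * X ^ (j : ℕ) else B * X ^ ((j : ℕ) - n)

/-- Sylvester-type matrix. -/
def sylM (A B : S[X]) (m n : ℕ) : Matrix (Fin (m + n)) (Fin (m + n)) S :=
  fun i j => (sylCol A B m n j).coeff i

def psi (A B : S[X]) (m n : ℕ) (v : Fin (m + n) → S) : S[X] :=
  ∑ j : Fin (m + n), C (v j) * sylCol A B m n j

def uOf (m n : ℕ) (v : Fin (m + n) → S) : S[X] :=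
  ∑ j : Fin (m + n), if (j : ℕ) < n then C (v j) * X ^ (j : ℕ) else 0

def wOf (m n : ℕ) (v : Fin (m + n) → S) : S[X] :=
  ∑ j : Fin (m + n), if (j : ℕ) < n then 0 else C (v j) * X ^ ((j : ℕ) - n)

lemma psi_eq (A B : S[X]) (m n : ℕ) (v : Fin (m + n) → S) :
    psi A B m n v = uOf m n v * A + wOf m n v * B := by
  rw [psi, uOf, wOf, Finset.sum_mul, Finset.sum_mul, ← Finset.sum_add_distrib]
  refine Finset.sum_congr rfl fun j _ => ?_
  by_cases h : (j : ℕ) < n <;> simp [sylCol, h] <;> ring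

lemma coeff_uOf (m n : ℕ) (v : Fin (m + n) → S) (k : ℕ) :
    (uOf m n v).coeff k = if h : k < n then v ⟨k, lt_of_lt_of_le h (Nat.le_add_left n m)⟩ else 0 := by
  rw [uOf, finset_sum_coeff]
  by_cases h : k < n
  · rw [dif_pos h]
    rw [Finset.sum_eq_single (⟨k, lt_of_lt_of_le h (Nat.le_add_left n m)⟩ : Fin (m + n))]
    · simp [h, coeff_C_mul, coeff_X_pow]
    · intro j _ hj
      have : (j : ℕ) ≠ k := fun hc => hj (Fin.ext hc)
      by_cases h2 : (j : ℕ) < n <;> simp [h2, coeff_C_mul, coeff_X_pow, Ne.symm this]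
    · intro hc; exact absurd (Finset.mem_univ _) hc
  · rw [dif_neg h]
    refine Finset.sum_eq_zero fun j _ => ?_
    by_cases h2 : (j : ℕ) < n
    · have : k ≠ (j : ℕ) := fun hc => h (hc ▸ h2)
      simp [h2, coeff_C_mul, coeff_X_pow, this]
    · simp [h2]

lemma coeff_wOf (m n : ℕ) (v : Fin (m + n) → S) (k : ℕ) :
    (wOf m n v).coeff k = if h : n + k < m + n then v ⟨n + k, h⟩ else 0 := by
  rw [wOf, finset_sum_coeff]
  by_cases h : n + k < m + n
  · rw [dif_pos h]
    rw [Finset.sum_eq_single (⟨n + k, h⟩ : Fin (m + n))]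
    · have h1 : ¬ ((n + k) < n) := by omega
      have h2 : n + k - n = k := by omega
      simp [h1, h2, coeff_C_mul, coeff_X_pow]
    · intro j _ hj
      by_cases h2 : (j : ℕ) < n
      · simp [h2]
      · have hv : (j : ℕ) ≠ n + k := fun hc => hj (Fin.ext (by rw [hc]))
        have : k ≠ (j : ℕ) - n := by omega
        simp [h2, coeff_C_mul, coeff_X_pow, this]
    · intro hc; exact absurd (Finset.mem_univ _) hc
  · rw [dif_neg h]
    refine Finset.sum_eq_zero fun j _ => ?_
    by_cases h2 : (j : ℕ) < n
    · simp [h2]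
    · have : k ≠ (j : ℕ) - n := by
        intro hc
        have := j.isLt
        omega
      simp [h2, coeff_C_mul, coeff_X_pow, this]

lemma uOf_wOf_zero (m n : ℕ) (v : Fin (m + n) → S) (hu : uOf m n v = 0)
    (hw : wOf m n v = 0) : v = 0 := by
  funext j
  by_cases h : (j : ℕ) < n
  · have := coeff_uOf m n v j
    rw [hu, coeff_zero, dif_pos h] at this
    simpa using this.symm
  · have h2 : n + ((j : ℕ) - n) < m + n := by have := j.isLt; omega
    have := coeff_wOf m n v ((j : ℕ) - n)
    rw [hw, coeff_zero, dif_pos h2] at this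
    have hj : (⟨n + ((j : ℕ) - n), h2⟩ : Fin (m + n)) = j := by
      refine Fin.ext ?_
      simp only [Fin.val_mk]
      omega
    rw [hj] at this
    simpa using this.symm

lemma degree_uOf_lt (m n : ℕ) (v : Fin (m + n) → S) : (uOf m n v).degree < (n : ℕ) := by
  refine lt_of_le_of_lt (degree_sum_le _ _) ?_
  rw [Finset.sup_lt_iff (by exact_mod_cast WithBot.bot_lt_coe n)]
  intro j _
  by_cases h : (j : ℕ) < n
  · rw [if_pos h]
    refine lt_of_le_of_lt (degree_C_mul_le' _ _) ?_
    refine lt_of_le_of_lt (degree_X_pow_le _) ?_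
    exact_mod_cast Nat.cast_lt.2 h
  · rw [if_neg h, degree_zero]
    exact_mod_cast WithBot.bot_lt_coe n

lemma degree_wOf_lt (m n : ℕ) (v : Fin (m + n) → S) : (wOf m n v).degree < (m : ℕ) := by
  refine lt_of_le_of_lt (degree_sum_le _ _) ?_
  rw [Finset.sup_lt_iff (by exact_mod_cast WithBot.bot_lt_coe m)]
  intro j _
  by_cases h : (j : ℕ) < n
  · rw [if_pos h, degree_zero]
    exact_mod_cast WithBot.bot_lt_coe m
  · rw [if_neg h]
    refine lt_of_le_of_lt (degree_C_mul_le' _ _) ?_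
    refine lt_of_le_of_lt (degree_X_pow_le _) ?_
    have hjlt : (j : ℕ) < m + n := j.isLt
    have hlt : ((j : ℕ) - n) < m := by omega
    exact_mod_cast hlt

lemma degree_psi_lt (A B : S[X]) (m n : ℕ) (hA : A.degree ≤ (m : ℕ)) (hB : B.degree ≤ (n : ℕ))
    (v : Fin (m + n) → S) : (psi A B m n v).degree < ((m + n : ℕ) : WithBot ℕ) := by
  rw [psi_eq]
  refine lt_of_le_of_lt (degree_add_le _ _) (max_lt ?_ ?_)
  · refine lt_of_le_of_lt (degree_mul_le _ _) ?_
    calc (uOf m n v).degree + A.degree < (n : ℕ) + (m : ℕ) := by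
          by_cases hA0 : A = 0
          · simp only [hA0, degree_zero, WithBot.add_bot]; exact WithBot.bot_lt_coe _
          apply WithBot.add_lt_add_of_lt_of_le (by simpa using hA0) (degree_uOf_lt m n v) hA
      _ = ((m + n : ℕ) : WithBot ℕ) := by
          push_cast; ring
  · refine lt_of_le_of_lt (degree_mul_le _ _) ?_
    calc (wOf m n v).degree + B.degree < (m : ℕ) + (n : ℕ) := by
          by_cases hB0 : B = 0
          · simp only [hB0, degree_zero, WithBot.add_bot]; exact WithBot.bot_lt_coe _
          apply WithBot.add_lt_add_of_lt_of_le (by simpa using hB0) (degree_wOf_lt m n v) hB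
      _ = ((m + n : ℕ) : WithBot ℕ) := by
          push_cast; ring

lemma mulVec_eq_coeff (A B : S[X]) (m n : ℕ) (v : Fin (m + n) → S) (i : Fin (m + n)) :
    (sylM A B m n).mulVec v i = (psi A B m n v).coeff i := by
  rw [Matrix.mulVec, dotProduct, psi, finset_sum_coeff]
  refine Finset.sum_congr rfl fun j _ => ?_
  rw [coeff_C_mul, sylM, mul_comm]

lemma mulVec_zero_iff_psi (A B : S[X]) (m n : ℕ) (hA : A.degree ≤ (m : ℕ))
    (hB : B.degree ≤ (n : ℕ)) (v : Fin (m + n) → S) :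
    (sylM A B m n).mulVec v = 0 ↔ psi A B m n v = 0 := by
  constructor
  · intro h
    ext k
    by_cases hk : k < m + n
    · have := congrFun h ⟨k, hk⟩
      rw [mulVec_eq_coeff] at this
      simpa using this
    · simp only [coeff_zero]
      refine coeff_eq_zero_of_degree_lt (lt_of_lt_of_le (degree_psi_lt A B m n hA hB v) ?_)
      exact_mod_cast (by omega : m + n ≤ k)
  · intro h
    funext i
    rw [Pi.zero_apply, mulVec_eq_coeff, h, coeff_zero]

lemma uOf_vOf (m n : ℕ) (u w : S[X]) (hu : u.degree < (n : ℕ)) (hw : w.degree < (m : ℕ)) :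
    uOf m n (fun j => if _ : (j : ℕ) < n then u.coeff j else w.coeff ((j : ℕ) - n)) = u ∧
    wOf m n (fun j => if _ : (j : ℕ) < n then u.coeff j else w.coeff ((j : ℕ) - n)) = w := by
  constructor
  · ext k
    rw [coeff_uOf]
    by_cases h : k < n
    · rw [dif_pos h]
      show (if _ : k < n then u.coeff k else _) = u.coeff k
      rw [dif_pos h]
    · rw [dif_neg h]
      exact (coeff_eq_zero_of_degree_lt (lt_of_lt_of_le hu (by exact_mod_cast (by omega : n ≤ k)))).symm
  · ext k
    rw [coeff_wOf]
    by_cases h : n + k < m + n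
    · rw [dif_pos h]
      show (if _ : n + k < n then _ else w.coeff (n + k - n)) = w.coeff k
      rw [dif_neg (by omega : ¬ (n + k < n))]
      congr 1
      omega
    · rw [dif_neg h]
      exact (coeff_eq_zero_of_degree_lt (lt_of_lt_of_le hw (by exact_mod_cast (by omega : m ≤ k)))).symm

lemma det_sylM_ne_zero [IsDomain S] (A B : S[X]) (m n : ℕ)
    (hA : A.degree ≤ (m : ℕ)) (hB : B.degree ≤ (n : ℕ))
    (hcop : ∀ u w : S[X], u * A + w * B = 0 → u.degree < (n : ℕ) → w.degree < (m : ℕ) →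
      u = 0 ∧ w = 0) :
    (sylM A B m n).det ≠ 0 := by
  intro hdet
  obtain ⟨v, hv, hv0⟩ := Matrix.exists_mulVec_eq_zero_iff.2 hdet
  rw [mulVec_zero_iff_psi A B m n hA hB, psi_eq] at hv0
  obtain ⟨hu, hw⟩ := hcop _ _ hv0 (degree_uOf_lt m n v) (degree_wOf_lt m n v)
  exact hv (uOf_wOf_zero m n v hu hw)

set_option maxHeartbeats 1000000 in
lemma det_sylM_eq_zero {k : Type*} [Field k] (A B : k[X]) (m n : ℕ)
    (hA : A.degree ≤ (m : ℕ)) (hB : B.degree ≤ (n : ℕ)) (hB0 : B ≠ 0) (y : k)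
    (hyA : A.IsRoot y) (hyB : B.IsRoot y) : (sylM A B m n).det = 0 := by
  rw [← Matrix.exists_mulVec_eq_zero_iff]
  have hBu : (X - C y) * (B /ₘ (X - C y)) = B := mul_divByMonic_eq_iff_isRoot.2 hyB
  have hAw : (X - C y) * (A /ₘ (X - C y)) = A := mul_divByMonic_eq_iff_isRoot.2 hyA
  have hsum0 : (B /ₘ (X - C y)) * ((X - C y) * (A /ₘ (X - C y))) +
      (-(A /ₘ (X - C y))) * ((X - C y) * (B /ₘ (X - C y))) = 0 := by ring
  rw [hAw, hBu] at hsum0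
  set u : k[X] := B /ₘ (X - C y) with hud
  set w : k[X] := -(A /ₘ (X - C y)) with hwd
  have hune : u ≠ 0 := by
    intro h0; rw [h0, mul_zero] at hBu; exact hB0 hBu.symm
  have hsum : u * A + w * B = 0 := hsum0
  have hdlin : (0 : WithBot ℕ) < (X - C y).degree := by rw [degree_X_sub_C]; norm_num
  have hudeg : u.degree < (n : ℕ) :=
    lt_of_lt_of_le (degree_divByMonic_lt _ _ hB0 hdlin) hB
  have hwdeg : w.degree < (m : ℕ) := by
    rw [hwd, degree_neg]
    by_cases hA0 : A = 0
    · rw [hA0, zero_divByMonic, degree_zero]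
      exact_mod_cast WithBot.bot_lt_coe m
    · exact lt_of_lt_of_le (degree_divByMonic_lt _ _ hA0 hdlin) hA
  obtain ⟨huo, hwo⟩ := uOf_vOf m n u w hudeg hwdeg
  refine ⟨fun j => if _ : (j : ℕ) < n then u.coeff j else w.coeff ((j : ℕ) - n), ?_, ?_⟩
  · intro h0
    rw [h0] at huo
    apply hune
    rw [← huo, uOf]
    simp
  · rw [mulVec_zero_iff_psi A B m n hA hB, psi_eq, huo, hwo]
    exact hsum

lemma natDegree_det_le {R : Type*} [CommRing R] {N : ℕ}
    (M : Matrix (Fin N) (Fin N) (Polynomial R)) (D : ℕ)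
    (hM : ∀ i j, (M i j).natDegree ≤ D) : M.det.natDegree ≤ N * D := by
  rw [Matrix.det_apply]
  refine natDegree_sum_le_of_forall_le _ _ fun σ _ => ?_
  have hprod : (∏ i, M (σ i) i).natDegree ≤ N * D := by
    refine le_trans (natDegree_prod_le _ _) ?_
    refine le_trans (Finset.sum_le_sum fun i _ => hM (σ i) i) ?_
    simp [Finset.sum_const, Finset.card_univ, Nat.smul_one_eq_cast]
  rcases Int.units_eq_one_or (Equiv.Perm.sign σ) with h | h <;> rw [h]
  · rwa [one_smul]
  · rw [Units.neg_smul, one_smul, natDegree_neg]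
    exact hprod

lemma sylM_map {S' : Type*} [CommRing S'] (φ : S →+* S') (A B : S[X]) (m n : ℕ) :
    (sylM A B m n).map φ = sylM (A.map φ) (B.map φ) m n := by
  ext i j
  simp only [Matrix.map_apply, sylM, sylCol]
  by_cases h : (j : ℕ) < n <;>
    simp only [h, if_true, if_false, ← coeff_map, Polynomial.map_mul, Polynomial.map_pow,
      Polynomial.map_X]

end Syl
section Biv

variable {K : Type*} [Field K] (F : Polynomial K)

/-- `G(x,y) = F(x) - F(y) - F'(x)(x-y)`, with `x = C X` (inner) and `y = X` (outer). -/
def Gpoly : Polynomial (Polynomial K) :=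
  C F - F.map C - C (derivative F) * (C X - X)

/-- `H(x,y) = F'(x) - F'(y)`. -/
def Hpoly : Polynomial (Polynomial K) :=
  C (derivative F) - (derivative F).map C

/-- `H₁(x,y) = (F'(x) - F'(y))/(x - y)`. -/
def H1poly : Polynomial (Polynomial K) :=
  ∑ k ∈ Finset.range F.natDegree, ∑ i ∈ Finset.range k,
    C (C ((derivative F).coeff k) * X ^ i) * X ^ (k - 1 - i)

/-- The involution of `K[X][Y]` swapping the two variables. -/
def swapHom : Polynomial (Polynomial K) →+* Polynomial (Polynomial K) :=
  eval₂RingHom (mapRingHom C) (C X)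

lemma swapHom_C (p : Polynomial K) : swapHom (C p) = p.map C :=
  eval₂_C _ _

lemma swapHom_X : swapHom (X : Polynomial (Polynomial K)) = C X :=
  eval₂_X _ _

lemma swapHom_map_C (p : Polynomial K) : swapHom (p.map C) = C p := by
  induction p using Polynomial.induction_on' with
  | add p q hp hq => rw [Polynomial.map_add, map_add, hp, hq, map_add]
  | monomial n a =>
      rw [← C_mul_X_pow_eq_monomial, Polynomial.map_mul, Polynomial.map_pow, Polynomial.map_X,
        Polynomial.map_C, map_mul, map_pow, swapHom_X, swapHom_C, Polynomial.map_C, ← map_pow,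
        ← map_mul, C_mul_X_pow_eq_monomial]

lemma swapHom_swapHom (p : Polynomial (Polynomial K)) : swapHom (swapHom p) = p := by
  induction p using Polynomial.induction_on' with
  | add p q hp hq => rw [map_add, map_add, hp, hq]
  | monomial n a =>
      rw [← C_mul_X_pow_eq_monomial, map_mul, map_pow, map_mul, map_pow, swapHom_C,
        swapHom_map_C, swapHom_X, swapHom_C, Polynomial.map_X]

lemma swapHom_injective : Function.Injective (swapHom (K := K)) := by
  intro a b h
  have := congrArg swapHom h
  rwa [swapHom_swapHom, swapHom_swapHom] at this

lemma swapHom_prime {P : Polynomial (Polynomial K)} (hP : Prime P) : Prime (swapHom P) := by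
  refine ⟨fun h0 => hP.1 (swapHom_injective (by rw [h0, map_zero])), fun hu => hP.2.1 ?_, ?_⟩
  · have := hu.map swapHom
    rwa [swapHom_swapHom] at this
  · intro a b hdvd
    have h2 : P ∣ swapHom a * swapHom b := by
      have := map_dvd swapHom hdvd
      rwa [swapHom_swapHom, map_mul] at this
    rcases hP.2.2 _ _ h2 with h | h
    · left
      have := map_dvd swapHom h
      rwa [swapHom_swapHom] at this
    · right
      have := map_dvd swapHom h
      rwa [swapHom_swapHom] at this

/-- derivative in the outer variable of `G` is `H`. -/
lemma derivative_Gpoly : derivative (Gpoly F) = Hpoly F := by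
  rw [Gpoly, Hpoly, derivative_sub, derivative_sub, derivative_C, derivative_map,
    derivative_C_mul, derivative_sub, derivative_C, derivative_X]
  ring

lemma derivative_Hpoly : derivative (Hpoly F) = -((derivative (derivative F)).map C) := by
  rw [Hpoly, derivative_sub, derivative_C, derivative_map]
  ring

lemma Fprime_as_sum (hd : 1 ≤ F.natDegree) :
    derivative F = ∑ k ∈ Finset.range F.natDegree, C ((derivative F).coeff k) * X ^ k := by
  have h : (derivative F).natDegree < F.natDegree :=
    lt_of_le_of_lt (natDegree_derivative_le F) (by omega)
  conv_lhs => rw [(derivative F).as_sum_range' F.natDegree h]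
  exact Finset.sum_congr rfl fun k _ => (C_mul_X_pow_eq_monomial).symm

lemma CX_mul_H1 (hd : 1 ≤ F.natDegree) :
    (C X - X) * H1poly F = Hpoly F := by
  rw [H1poly, Finset.mul_sum]
  have hterm : ∀ k ∈ Finset.range F.natDegree,
      (C X - X) * ∑ i ∈ Finset.range k,
        C (C ((derivative F).coeff k) * X ^ i) * X ^ (k - 1 - i)
      = C (C ((derivative F).coeff k)) * ((C X : Polynomial (Polynomial K)) ^ k - X ^ k) := by
    intro k _
    have h1 : ∀ i, (C (C ((derivative F).coeff k) * X ^ i) * X ^ (k - 1 - i) :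
        Polynomial (Polynomial K))
        = C (C ((derivative F).coeff k)) * ((C X) ^ i * X ^ (k - 1 - i)) := by
      intro i
      rw [map_mul, map_pow]
      ring
    rw [Finset.sum_congr rfl fun i _ => h1 i, ← Finset.mul_sum]
    rw [show (C X - X) * (C (C ((derivative F).coeff k)) *
        ∑ i ∈ Finset.range k, (C X : Polynomial (Polynomial K)) ^ i * X ^ (k - 1 - i))
      = C (C ((derivative F).coeff k)) *
        ((∑ i ∈ Finset.range k, (C X : Polynomial (Polynomial K)) ^ i * X ^ (k - 1 - i))
          * (C X - X)) by ring]
    rw [geom_sum₂_mul]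
  rw [Finset.sum_congr rfl hterm, Hpoly]
  conv_rhs => rw [Fprime_as_sum F hd]
  rw [Polynomial.map_sum]
  simp only [Polynomial.map_mul, Polynomial.map_pow, Polynomial.map_C, Polynomial.map_X,
    mul_sub]
  rw [Finset.sum_sub_distrib]
  congr 1
  rw [map_sum]
  refine Finset.sum_congr rfl fun k _ => ?_
  rw [map_mul, map_pow]

lemma swap_Gpoly : swapHom (Gpoly F) = (X - C X) * Hpoly F - Gpoly F := by
  rw [Gpoly, Hpoly]
  simp only [map_sub, map_mul, swapHom_C, swapHom_map_C, swapHom_X, Polynomial.map_X]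
  ring

lemma X_sub_CX_ne_zero : (C X - X : Polynomial (Polynomial K)) ≠ 0 := by
  rw [show (C X - X : Polynomial (Polynomial K)) = -(X - C X) by ring]
  exact neg_ne_zero.2 (X_sub_C_ne_zero X)

lemma swap_H1poly (hd : 1 ≤ F.natDegree) : swapHom (H1poly F) = H1poly F := by
  have h := congrArg swapHom (CX_mul_H1 F hd)
  rw [map_mul, map_sub, swapHom_C, swapHom_X, Polynomial.map_X] at h
  have h2 : swapHom (Hpoly F) = -(Hpoly F) := by
    rw [Hpoly]
    simp only [map_sub, swapHom_C, swapHom_map_C]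
    ring
  rw [h2, ← CX_mul_H1 F hd] at h
  have h3 : (C X - X : Polynomial (Polynomial K)) * swapHom (H1poly F)
      = (C X - X) * H1poly F := by linear_combination -h
  exact mul_left_cancel₀ (X_sub_CX_ne_zero) h3

lemma evalDiag_H1 (hd : 1 ≤ F.natDegree) :
    eval (X : Polynomial K) (H1poly F) = derivative (derivative F) := by
  rw [H1poly, eval_finset_sum]
  have hterm : ∀ k ∈ Finset.range F.natDegree,
      eval (X : Polynomial K) (∑ i ∈ Finset.range k,
        C (C ((derivative F).coeff k) * X ^ i) * X ^ (k - 1 - i))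
      = C ((derivative F).coeff k) * (C (k : K) * X ^ (k - 1)) := by
    intro k _
    rw [eval_finset_sum]
    have h1 : ∀ i ∈ Finset.range k,
        eval (X : Polynomial K) (C (C ((derivative F).coeff k) * X ^ i) * X ^ (k - 1 - i))
        = C ((derivative F).coeff k) * X ^ (k - 1) := by
      intro i hi
      rw [eval_mul, eval_C, eval_pow, eval_X, mul_assoc, ← pow_add]
      congr 2
      have := Finset.mem_range.1 hi
      omega
    rw [Finset.sum_congr rfl h1, Finset.sum_const, Finset.card_range, nsmul_eq_mul,
      ← C_eq_natCast]
    ring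
  rw [Finset.sum_congr rfl hterm]
  conv_rhs => rw [Fprime_as_sum F hd]
  rw [map_sum]
  refine (Finset.sum_congr rfl fun k _ => ?_).symm
  rw [derivative_C_mul, derivative_X_pow]

lemma Fprime_coeff_top (hd : 1 ≤ F.natDegree) (hmon : F.Monic) :
    (derivative F).coeff (F.natDegree - 1) = (F.natDegree : K) := by
  rw [coeff_derivative]
  have h : F.natDegree - 1 + 1 = F.natDegree := by omega
  rw [h, hmon.coeff_natDegree, one_mul, Nat.cast_sub (by omega : 1 ≤ F.natDegree), Nat.cast_one]
  ring

lemma natDegree_Fprime (hd : 2 ≤ F.natDegree) (hmon : F.Monic) (hdK : (F.natDegree : K) ≠ 0) :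
    (derivative F).natDegree = F.natDegree - 1 := by
  refine le_antisymm (natDegree_derivative_le F) (le_natDegree_of_ne_zero ?_)
  rw [Fprime_coeff_top F (by omega) hmon]
  exact hdK

lemma coeff_G_large {k : ℕ} (hd : 2 ≤ F.natDegree) (hk : F.natDegree < k) :
    (Gpoly F).coeff k = 0 := by
  have h0 : k ≠ 0 := by omega
  have h1 : k ≠ 1 := by omega
  simp only [Gpoly, mul_sub, ← map_mul, coeff_sub, coeff_C, coeff_map, coeff_C_mul, coeff_X,
    if_neg h0, coeff_eq_zero_of_natDegree_lt hk, map_zero]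
  rw [if_neg (fun hc => h1 hc.symm)]
  ring

lemma coeff_G_top (hd : 2 ≤ F.natDegree) (hmon : F.Monic) :
    (Gpoly F).coeff F.natDegree = -1 := by
  have h0 : F.natDegree ≠ 0 := by omega
  have h1 : F.natDegree ≠ 1 := by omega
  simp only [Gpoly, mul_sub, ← map_mul, coeff_sub, coeff_C, coeff_map, coeff_C_mul, coeff_X,
    if_neg h0, hmon.coeff_natDegree, map_one]
  rw [if_neg (fun hc => h1 hc.symm)]
  ring

lemma coeff_Gpoly_eq (k : ℕ) : (Gpoly F).coeff k =
    (if k = 0 then F - derivative F * X else 0) - C (F.coeff k)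
      + (if k = 1 then derivative F else 0) := by
  simp only [Gpoly, mul_sub, ← map_mul, coeff_sub, coeff_C, coeff_map, coeff_C_mul, coeff_X,
    mul_ite, mul_one, mul_zero]
  split_ifs <;> first
  | (exfalso; omega)
  | ring

lemma natDegree_coeff_G (hd : 2 ≤ F.natDegree) (k : ℕ) :
    ((Gpoly F).coeff k).natDegree ≤ F.natDegree := by
  have hF' : (derivative F).natDegree ≤ F.natDegree :=
    le_trans (natDegree_derivative_le F) (Nat.sub_le _ _)
  have hF'X : (derivative F * X).natDegree ≤ F.natDegree := by
    calc (derivative F * X).natDegree ≤ (derivative F).natDegree + (X : Polynomial K).natDegree :=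
          natDegree_mul_le
      _ ≤ (F.natDegree - 1) + 1 := add_le_add (natDegree_derivative_le F) natDegree_X_le
      _ ≤ F.natDegree := by omega
  rw [coeff_Gpoly_eq]
  refine le_trans (natDegree_add_le _ _) (max_le (le_trans (natDegree_sub_le _ _)
    (max_le ?_ ?_)) ?_)
  · split_ifs
    · exact le_trans (natDegree_sub_le _ _) (max_le (le_refl _) hF'X)
    · simp
  · simp [natDegree_C]
  · split_ifs
    · exact hF'
    · simp

lemma coeff_H_large {k : ℕ} (hk : F.natDegree - 1 < k) (hd : 2 ≤ F.natDegree) :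
    (Hpoly F).coeff k = 0 := by
  have h0 : k ≠ 0 := by omega
  have hk' : (derivative F).natDegree < k := lt_of_le_of_lt (natDegree_derivative_le F) hk
  simp only [Hpoly, coeff_sub, coeff_C, coeff_map, if_neg h0,
    coeff_eq_zero_of_natDegree_lt hk', map_zero]
  ring

lemma coeff_H_top (hd : 2 ≤ F.natDegree) (hmon : F.Monic) :
    (Hpoly F).coeff (F.natDegree - 1) = -C (F.natDegree : K) := by
  have h0 : F.natDegree - 1 ≠ 0 := by omega
  simp only [Hpoly, coeff_sub, coeff_C, coeff_map, if_neg h0,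
    Fprime_coeff_top F (by omega : 1 ≤ F.natDegree) hmon]
  ring

lemma natDegree_Hpoly (hd : 2 ≤ F.natDegree) (hmon : F.Monic) (hdK : (F.natDegree : K) ≠ 0) :
    (Hpoly F).natDegree = F.natDegree - 1 := by
  refine le_antisymm (natDegree_le_iff_coeff_eq_zero.2 fun m hm => coeff_H_large F hm hd)
    (le_natDegree_of_ne_zero ?_)
  rw [coeff_H_top F hd hmon]
  simp only [ne_eq, neg_eq_zero, C_eq_zero]
  exact hdK

lemma Hpoly_ne_zero (hd : 2 ≤ F.natDegree) (hmon : F.Monic) (hdK : (F.natDegree : K) ≠ 0) :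
    Hpoly F ≠ 0 := by
  intro h
  have h2 := coeff_H_top F hd hmon
  rw [h, coeff_zero] at h2
  apply hdK
  have h3 : (C (F.natDegree : K) : Polynomial K) = 0 := by linear_combination h2
  exact C_eq_zero.mp h3

lemma H1poly_ne_zero (hd : 2 ≤ F.natDegree) (hmon : F.Monic) (hdK : (F.natDegree : K) ≠ 0) :
    H1poly F ≠ 0 := by
  intro h
  apply Hpoly_ne_zero F hd hmon hdK
  rw [← CX_mul_H1 F (by omega), h, mul_zero]

lemma natDegree_H1poly (hd : 2 ≤ F.natDegree) (hmon : F.Monic) (hdK : (F.natDegree : K) ≠ 0) :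
    (H1poly F).natDegree = F.natDegree - 2 := by
  have h := CX_mul_H1 F (by omega : 1 ≤ F.natDegree)
  have hdm : ((C X - X : Polynomial (Polynomial K)) * H1poly F).natDegree
      = 1 + (H1poly F).natDegree := by
    rw [natDegree_mul (X_sub_CX_ne_zero) (H1poly_ne_zero F hd hmon hdK)]
    congr 1
    rw [show (C X - X : Polynomial (Polynomial K)) = -(X - C X) by ring, natDegree_neg,
      natDegree_X_sub_C]
  rw [h, natDegree_Hpoly F hd hmon hdK] at hdm
  omega

lemma coeff_H1_top (hd : 2 ≤ F.natDegree) (hmon : F.Monic) (hdK : (F.natDegree : K) ≠ 0) :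
    (H1poly F).coeff (F.natDegree - 2) = C (F.natDegree : K) := by
  have h := CX_mul_H1 F (by omega : 1 ≤ F.natDegree)
  have hlc : (Hpoly F).leadingCoeff = (C X - X : Polynomial (Polynomial K)).leadingCoeff *
      (H1poly F).leadingCoeff := by rw [← h, leadingCoeff_mul]
  have h1 : (C X - X : Polynomial (Polynomial K)).leadingCoeff = -1 := by
    rw [show (C X - X : Polynomial (Polynomial K)) = -(X - C X) by ring, leadingCoeff_neg,
      (monic_X_sub_C (X : Polynomial K)).leadingCoeff]
  have h2 : (Hpoly F).leadingCoeff = -C (F.natDegree : K) := by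
    rw [leadingCoeff, natDegree_Hpoly F hd hmon hdK, coeff_H_top F hd hmon]
  have h3 : (H1poly F).leadingCoeff = C (F.natDegree : K) := by
    rw [h2, h1] at hlc
    linear_combination hlc
  rw [← natDegree_H1poly F hd hmon hdK, ← leadingCoeff, h3]

lemma natDegree_coeff_H1 (j : ℕ) : ((H1poly F).coeff j).natDegree ≤ F.natDegree := by
  rw [H1poly, finset_sum_coeff]
  refine natDegree_sum_le_of_forall_le _ _ fun k hk => ?_
  rw [finset_sum_coeff]
  refine natDegree_sum_le_of_forall_le _ _ fun i hi => ?_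
  rw [coeff_C_mul, coeff_X_pow, mul_ite, mul_one, mul_zero]
  have hik : i < k := Finset.mem_range.1 hi
  have hkd : k < F.natDegree := Finset.mem_range.1 hk
  split_ifs
  · refine le_trans (natDegree_mul_le) ?_
    have h1 : (C ((derivative F).coeff k) : Polynomial K).natDegree = 0 := natDegree_C _
    have h2 : ((X : Polynomial K) ^ i).natDegree ≤ i := by
      simpa using natDegree_pow_le_of_le i (natDegree_X_le (R := K))
    omega
  · simp

lemma Gpoly_ne_zero (hd : 2 ≤ F.natDegree) (hmon : F.Monic) : Gpoly F ≠ 0 := by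
  intro h
  have h2 := coeff_G_top F hd hmon
  rw [h, coeff_zero] at h2
  have h1 : (1 : Polynomial K) = 0 := by linear_combination h2
  exact one_ne_zero h1

lemma natDegree_Gpoly (hd : 2 ≤ F.natDegree) (hmon : F.Monic) :
    (Gpoly F).natDegree = F.natDegree := by
  refine le_antisymm (natDegree_le_iff_coeff_eq_zero.2 fun m hm => coeff_G_large F hd hm)
    (le_natDegree_of_ne_zero ?_)
  rw [coeff_G_top F hd hmon]
  intro hc
  exact one_ne_zero (by linear_combination -hc : (1 : Polynomial K) = 0)

variable [IsAlgClosed K]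

lemma prime_dvd_H1_facts (hd : 2 ≤ F.natDegree) (hmon : F.Monic) (hdK : (F.natDegree : K) ≠ 0)
    (hF2 : derivative (derivative F) ≠ 0)
    {Q : Polynomial (Polynomial K)} (hQ : Prime Q) (hQH1 : Q ∣ H1poly F) :
    ¬ Q ∣ (derivative (derivative F)).map C ∧
      ¬ Q ∣ (C X - X : Polynomial (Polynomial K)) := by
  have hd1 : 1 ≤ F.natDegree := by omega
  have hH1H : H1poly F ∣ Hpoly F := Dvd.intro_left _ (CX_mul_H1 F hd1)
  constructor
  · intro hdvd
    have hsplit : derivative (derivative F) = C (derivative (derivative F)).leadingCoeff *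
        ((derivative (derivative F)).roots.map fun a => X - C a).prod :=
      (IsAlgClosed.splits _).eq_prod_roots
    have hmap : (derivative (derivative F)).map C =
        C (C (derivative (derivative F)).leadingCoeff) *
        ((derivative (derivative F)).roots.map
          fun a => (X : Polynomial (Polynomial K)) - C (C a)).prod := by
      conv_lhs => rw [hsplit]
      rw [Polynomial.map_mul, Polynomial.map_C]
      congr 1
      rw [← coe_mapRingHom, map_multiset_prod, Multiset.map_map]
      congr 1
      refine Multiset.map_congr rfl fun a _ => ?_
      simp only [Function.comp_apply, coe_mapRingHom, Polynomial.map_sub, Polynomial.map_X,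
        Polynomial.map_C]
    rw [hmap] at hdvd
    rcases hQ.2.2 _ _ hdvd with h | h
    · refine hQ.2.1 (isUnit_of_dvd_unit h ?_)
      rw [Polynomial.isUnit_C, Polynomial.isUnit_C]
      exact isUnit_iff_ne_zero.2 (leadingCoeff_ne_zero.2 hF2)
    · obtain ⟨le, hle, hQle⟩ := hQ.exists_mem_multiset_dvd h
      obtain ⟨a, _, rfl⟩ := Multiset.mem_map.1 hle
      have hassoc : Associated Q ((X : Polynomial (Polynomial K)) - C (C a)) :=
        hQ.associated_of_dvd (prime_X_sub_C (C a)) hQle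
      have hlin : ((X : Polynomial (Polynomial K)) - C (C a)) ∣ Hpoly F :=
        (hassoc.symm.dvd.trans hQH1).trans hH1H
      have hroot : IsRoot (Hpoly F) (C a) := dvd_iff_isRoot.1 hlin
      have heval : eval (C a) (Hpoly F) = derivative F - C ((derivative F).eval a) := by
        rw [Hpoly, eval_sub, eval_C, eval_map, eval₂_at_apply]
      rw [IsRoot, heval, sub_eq_zero] at hroot
      have hdeg := congrArg natDegree hroot
      rw [natDegree_Fprime F hd hmon hdK, natDegree_C] at hdeg
      omega
  · intro hdvd
    have hprime : Prime (C X - X : Polynomial (Polynomial K)) := by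
      rw [show (C X - X : Polynomial (Polynomial K)) = -(X - C X) by ring]
      exact (prime_X_sub_C (X : Polynomial K)).neg
    have hassoc : Associated Q (C X - X : Polynomial (Polynomial K)) :=
      hQ.associated_of_dvd hprime hdvd
    have hlin : ((X : Polynomial (Polynomial K)) - C X) ∣ H1poly F := by
      have h5 : (C X - X : Polynomial (Polynomial K)) ∣ H1poly F := hassoc.symm.dvd.trans hQH1
      have h6 : (-(C X - X) : Polynomial (Polynomial K)) ∣ H1poly F := neg_dvd.mpr h5
      rwa [neg_sub] at h6
    have hroot : IsRoot (H1poly F) (X : Polynomial K) := dvd_iff_isRoot.1 hlin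
    rw [IsRoot, evalDiag_H1 F hd1] at hroot
    exact hF2 hroot

lemma no_common_prime (hd : 2 ≤ F.natDegree) (hmon : F.Monic) (hdK : (F.natDegree : K) ≠ 0)
    (hF2 : derivative (derivative F) ≠ 0)
    {P : Polynomial (Polynomial K)} (hP : Prime P)
    (hPG : P ∣ Gpoly F) (hPH : P ∣ H1poly F) : False := by
  have hd1 : 1 ≤ F.natDegree := by omega
  have hH1H : H1poly F ∣ Hpoly F := Dvd.intro_left _ (CX_mul_H1 F hd1)
  obtain ⟨nd2a, nd2b⟩ := prime_dvd_H1_facts F hd hmon hdK hF2 hP hPH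
  obtain ⟨V, hV⟩ := id hPH
  have hPd : ¬ P ∣ derivative P := by
    intro hPd
    apply nd2a
    have hH : Hpoly F = (C X - X) * (P * V) := by rw [← CX_mul_H1 F hd1, hV]
    have hdvd : P ∣ derivative (Hpoly F) := by
      rw [hH, derivative_mul, derivative_mul]
      refine dvd_add ((dvd_mul_right P V).mul_left _) ?_
      exact (dvd_add (hPd.mul_right V) (dvd_mul_right P _)).mul_left _
    rw [derivative_Hpoly] at hdvd
    exact dvd_neg.mp hdvd
  obtain ⟨W, hW⟩ := hPG
  have hPW : P ∣ W := by
    have h1 : derivative P * W + P * derivative W = Hpoly F := by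
      rw [← derivative_Gpoly, hW, derivative_mul]
    have h2 : P ∣ Hpoly F := hPH.trans hH1H
    have h3 : P ∣ derivative P * W := by
      have heq : derivative P * W = Hpoly F - P * derivative W := by linear_combination h1
      rw [heq]
      exact dvd_sub h2 (dvd_mul_right _ _)
    rcases hP.2.2 _ _ h3 with h | h
    · exact absurd h hPd
    · exact h
  obtain ⟨W2, hW2⟩ := hPW
  have hQprime : Prime (swapHom P) := swapHom_prime hP
  have hQH1 : swapHom P ∣ H1poly F := by
    have := map_dvd swapHom ⟨V, hV⟩
    rwa [swap_H1poly F hd1] at this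
  obtain ⟨ndQa, ndQb⟩ := prime_dvd_H1_facts F hd hmon hdK hF2 hQprime hQH1
  have hsG : swapHom (Gpoly F) = swapHom P * (swapHom P * swapHom W2) := by
    rw [hW, hW2, map_mul, map_mul]
  have hdsG : derivative (swapHom (Gpoly F)) =
      -(((X : Polynomial (Polynomial K)) - C X) * ((derivative (derivative F)).map C)) := by
    rw [swap_Gpoly, derivative_sub, derivative_mul, derivative_Hpoly, derivative_Gpoly,
      derivative_sub, derivative_X, derivative_C]
    ring
  have hQdvd : swapHom P ∣ ((X : Polynomial (Polynomial K)) - C X) *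
      ((derivative (derivative F)).map C) := by
    have h7 : swapHom P ∣ derivative (swapHom (Gpoly F)) := by
      rw [hsG, derivative_mul]
      exact dvd_add ((dvd_mul_right _ _).mul_left _) (dvd_mul_right _ _)
    rw [hdsG] at h7
    exact dvd_neg.mp h7
  rcases hQprime.2.2 _ _ hQdvd with h | h
  · apply ndQb
    rw [← neg_sub (C X : Polynomial (Polynomial K)) X] at h
    exact dvd_neg.mp h
  · exact ndQa h

lemma isRelPrime_G_H1 (hd : 2 ≤ F.natDegree) (hmon : F.Monic) (hdK : (F.natDegree : K) ≠ 0)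
    (hF2 : derivative (derivative F) ≠ 0) :
    IsRelPrime (Gpoly F) (H1poly F) := by
  intro c hcG hcH
  by_contra hcu
  have hc0 : c ≠ 0 := by
    rintro rfl
    exact Gpoly_ne_zero F hd hmon (zero_dvd_iff.1 hcG)
  obtain ⟨P, hPirr, hPc⟩ := WfDvdMonoid.exists_irreducible_factor hcu hc0
  exact no_common_prime F hd hmon hdK hF2
    (UniqueFactorizationMonoid.irreducible_iff_prime.1 hPirr) (hPc.trans hcG) (hPc.trans hcH)

lemma cop_bezout (hd : 2 ≤ F.natDegree) (hmon : F.Monic) (hdK : (F.natDegree : K) ≠ 0)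
    (hF2 : derivative (derivative F) ≠ 0)
    (u w : Polynomial (Polynomial K)) (h : u * Gpoly F + w * H1poly F = 0)
    (hu : u.degree < ((F.natDegree - 2 : ℕ) : WithBot ℕ))
    (hw : w.degree < ((F.natDegree : ℕ) : WithBot ℕ)) : u = 0 ∧ w = 0 := by
  by_cases hw0 : w = 0
  · refine ⟨?_, hw0⟩
    rw [hw0, zero_mul, add_zero, mul_eq_zero] at h
    rcases h with h | h
    · exact h
    · exact absurd h (Gpoly_ne_zero F hd hmon)
  · exfalso
    have hdvd : Gpoly F ∣ w * H1poly F := ⟨-u, by linear_combination h⟩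
    have hGw : Gpoly F ∣ w :=
      (isRelPrime_G_H1 F hd hmon hdK hF2).dvd_of_dvd_mul_right hdvd
    have hdeg := degree_le_of_dvd hGw hw0
    rw [degree_eq_natDegree (Gpoly_ne_zero F hd hmon), natDegree_Gpoly F hd hmon] at hdeg
    exact absurd (lt_of_le_of_lt hdeg hw) (lt_irrefl _)

/-- The detector polynomial for bad `x` values. -/
def deltaPoly : Polynomial K :=
  (sylM (Gpoly F) (H1poly F) F.natDegree (F.natDegree - 2)).det

lemma degree_Gpoly_le (hd : 2 ≤ F.natDegree) (hmon : F.Monic) :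
    (Gpoly F).degree ≤ ((F.natDegree : ℕ) : WithBot ℕ) := by
  refine le_trans degree_le_natDegree ?_
  exact_mod_cast le_of_eq (natDegree_Gpoly F hd hmon)

lemma degree_H1_le (hd : 2 ≤ F.natDegree) (hmon : F.Monic) (hdK : (F.natDegree : K) ≠ 0) :
    (H1poly F).degree ≤ ((F.natDegree - 2 : ℕ) : WithBot ℕ) := by
  refine le_trans degree_le_natDegree ?_
  exact_mod_cast le_of_eq (natDegree_H1poly F hd hmon hdK)

lemma deltaPoly_ne_zero (hd : 2 ≤ F.natDegree) (hmon : F.Monic) (hdK : (F.natDegree : K) ≠ 0)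
    (hF2 : derivative (derivative F) ≠ 0) : deltaPoly F ≠ 0 := by
  refine det_sylM_ne_zero _ _ _ _ (degree_Gpoly_le F hd hmon) (degree_H1_le F hd hmon hdK) ?_
  exact fun u w h hu hw => cop_bezout F hd hmon hdK hF2 u w h hu hw

lemma natDegree_deltaPoly_le (hd : 2 ≤ F.natDegree) :
    (deltaPoly F).natDegree ≤ (F.natDegree + (F.natDegree - 2)) * F.natDegree := by
  refine natDegree_det_le _ _ fun i j => ?_
  show ((sylCol (Gpoly F) (H1poly F) F.natDegree (F.natDegree - 2) j).coeff (i : ℕ)).natDegree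
    ≤ F.natDegree
  rw [sylCol]
  by_cases h : (j : ℕ) < F.natDegree - 2
  · rw [if_pos h, coeff_mul_X_pow']
    split_ifs
    · exact natDegree_coeff_G F hd _
    · simp
  · rw [if_neg h, coeff_mul_X_pow']
    split_ifs
    · exact natDegree_coeff_H1 F _
    · simp

lemma H1map_ne_zero (hd : 2 ≤ F.natDegree) (hmon : F.Monic) (hdK : (F.natDegree : K) ≠ 0)
    (x : K) : (H1poly F).map (evalRingHom x) ≠ 0 := by
  intro h0
  have h1 := congrArg (fun p => coeff p (F.natDegree - 2)) h0
  simp only [coeff_map, coeff_zero] at h1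
  rw [coeff_H1_top F hd hmon hdK] at h1
  simp only [coe_evalRingHom, eval_C] at h1
  exact hdK h1

lemma deltaPoly_eval_eq_zero (hd : 2 ≤ F.natDegree) (hmon : F.Monic)
    (hdK : (F.natDegree : K) ≠ 0) (x y : K)
    (hxG : eval y ((Gpoly F).map (evalRingHom x)) = 0)
    (hxH : eval y ((H1poly F).map (evalRingHom x)) = 0) : (deltaPoly F).eval x = 0 := by
  have h1 : (deltaPoly F).eval x =
      ((sylM (Gpoly F) (H1poly F) F.natDegree (F.natDegree - 2)).map (evalRingHom x)).det := by
    rw [deltaPoly]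
    rw [show (eval x ((sylM (Gpoly F) (H1poly F) F.natDegree (F.natDegree - 2)).det))
      = (evalRingHom x) ((sylM (Gpoly F) (H1poly F) F.natDegree (F.natDegree - 2)).det)
      from rfl, RingHom.map_det, RingHom.mapMatrix_apply]
  rw [h1, sylM_map]
  refine det_sylM_eq_zero _ _ _ _ ?_ ?_ (H1map_ne_zero F hd hmon hdK x) y hxG hxH
  · exact le_trans (degree_map_le) (degree_Gpoly_le F hd hmon)
  · exact le_trans (degree_map_le) (degree_H1_le F hd hmon hdK)

/-- The finite set of "bad pairs". -/
def pairSet : Finset (K × K) :=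
  (deltaPoly F).roots.toFinset.biUnion fun x =>
    (((H1poly F).map (evalRingHom x)).roots.toFinset).image fun y => (x, y)

lemma mem_pairSet (hd : 2 ≤ F.natDegree) (hmon : F.Monic) (hdK : (F.natDegree : K) ≠ 0)
    (hF2 : derivative (derivative F) ≠ 0) {x y : K}
    (hG : eval y ((Gpoly F).map (evalRingHom x)) = 0)
    (hH : eval y ((H1poly F).map (evalRingHom x)) = 0) : (x, y) ∈ pairSet F := by
  rw [pairSet, Finset.mem_biUnion]
  refine ⟨x, ?_, ?_⟩
  · rw [Multiset.mem_toFinset, mem_roots']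
    exact ⟨deltaPoly_ne_zero F hd hmon hdK hF2,
      deltaPoly_eval_eq_zero F hd hmon hdK x y hG hH⟩
  · rw [Finset.mem_image]
    refine ⟨y, ?_, rfl⟩
    rw [Multiset.mem_toFinset, mem_roots']
    exact ⟨H1map_ne_zero F hd hmon hdK x, hH⟩

lemma card_pairSet_le (hd : 2 ≤ F.natDegree) (hmon : F.Monic) (hdK : (F.natDegree : K) ≠ 0) :
    (pairSet F).card ≤
      ((F.natDegree + (F.natDegree - 2)) * F.natDegree) * (F.natDegree - 2) := by
  refine le_trans (Finset.card_biUnion_le) ?_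
  have hx : ∀ x : K, ((((H1poly F).map (evalRingHom x)).roots.toFinset).image
      fun y => ((x, y) : K × K)).card ≤ F.natDegree - 2 := by
    intro x
    refine le_trans (Finset.card_image_le) ?_
    refine le_trans (Multiset.toFinset_card_le _) ?_
    refine le_trans (Polynomial.card_roots' _) ?_
    refine le_trans natDegree_map_le ?_
    exact le_of_eq (natDegree_H1poly F hd hmon hdK)
  refine le_trans (Finset.sum_le_sum fun x _ => hx x) ?_
  rw [Finset.sum_const, smul_eq_mul]
  refine Nat.mul_le_mul_right _ ?_
  refine le_trans (Multiset.toFinset_card_le _) ?_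
  refine le_trans (Polynomial.card_roots' _) ?_
  exact natDegree_deltaPoly_le F hd

lemma comp_evalRingHom_C (x : K) :
    (evalRingHom x).comp (C : K →+* Polynomial K) = RingHom.id K := by
  ext a
  simp

lemma evalEval_Gpoly (x y : K) : eval y ((Gpoly F).map (evalRingHom x)) =
    F.eval x - F.eval y - (derivative F).eval x * (x - y) := by
  rw [Gpoly, Polynomial.map_sub, Polynomial.map_sub, Polynomial.map_mul, Polynomial.map_sub,
    Polynomial.map_C, Polynomial.map_C, Polynomial.map_C, Polynomial.map_X, Polynomial.map_map,
    comp_evalRingHom_C, Polynomial.map_id]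
  simp only [coe_evalRingHom, eval_sub, eval_mul, eval_C, eval_X]

lemma evalEval_Hpoly (x y : K) : eval y ((Hpoly F).map (evalRingHom x)) =
    (derivative F).eval x - (derivative F).eval y := by
  rw [Hpoly, Polynomial.map_sub, Polynomial.map_C, Polynomial.map_map, comp_evalRingHom_C,
    Polynomial.map_id]
  simp only [coe_evalRingHom, eval_sub, eval_C]

lemma evalEval_H1_zero (hd1 : 1 ≤ F.natDegree) (x y : K) (hxy : x ≠ y)
    (hH : (derivative F).eval x = (derivative F).eval y) :
    eval y ((H1poly F).map (evalRingHom x)) = 0 := by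
  have h := congrArg (fun p => eval y (p.map (evalRingHom x))) (CX_mul_H1 F hd1)
  simp only [Polynomial.map_mul, eval_mul, Polynomial.map_sub, Polynomial.map_C,
    Polynomial.map_X, eval_sub, eval_C, eval_X, coe_evalRingHom] at h
  have h2 : (x - y) * eval y ((H1poly F).map (evalRingHom x)) = 0 := by
    rw [h, evalEval_Hpoly, hH, sub_self]
  rcases mul_eq_zero.1 h2 with h3 | h3
  · exact absurd h3 (sub_ne_zero.2 hxy)
  · exact h3

end Biv

end MorseAux

theorem stmt4 (d : ℕ) :
    ∃ C : ℕ, ∀ (Fq : Type) [Field Fq] [Fintype Fq],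
      Nat.Coprime (Fintype.card Fq) (2 * d) →
      ∀ f : Polynomial Fq, f.Monic → f.natDegree = d →
        Polynomial.derivative (Polynomial.derivative f) ≠ 0 →
        Nat.card {s : Fq // ¬ IsMorse (f + Polynomial.C s * Polynomial.X)} ≤ C := by
  classical
  use d + ((d + (d - 2)) * d) * (d - 2)
  intro Fq _ _ hco f hmon hdeg hf2
  set K := AlgebraicClosure Fq with hK
  set φ : Fq →+* K := algebraMap Fq K with hφ
  have hφinj : Function.Injective φ := φ.injective
  set F : Polynomial K := f.map φ with hFdef
  have hd2 : 2 ≤ d := by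
    by_contra hlt
    push_neg at hlt
    apply hf2
    have h1 : (derivative f).natDegree = 0 := by
      have := natDegree_derivative_le f
      omega
    rw [eq_C_of_natDegree_eq_zero h1, derivative_C]
  have hFmon : F.Monic := hmon.map φ
  have hFdeg : F.natDegree = d := by rw [hFdef, hmon.natDegree_map, hdeg]
  have hdK : ((F.natDegree : K)) ≠ 0 := by
    rw [hFdeg]
    intro h0
    have hp : CharP Fq (ringChar Fq) := ringChar.charP Fq
    obtain ⟨n, hprime, hcard⟩ := FiniteField.card Fq (ringChar Fq)
    have hdFq : (d : Fq) = 0 := by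
      apply hφinj
      rw [map_natCast, map_zero, h0]
    have hpd : ringChar Fq ∣ d := (CharP.cast_eq_zero_iff Fq (ringChar Fq) d).1 hdFq
    have hpq : ringChar Fq ∣ Fintype.card Fq := by
      rw [hcard]
      exact dvd_pow_self _ (by exact_mod_cast n.ne_zero)
    have h2d : ringChar Fq ∣ 2 * d := hpd.mul_left 2
    have h1 : ringChar Fq ∣ 1 := hco ▸ Nat.dvd_gcd hpq h2d
    exact hprime.one_lt.ne' (Nat.dvd_one.mp h1)
  have hF2 : derivative (derivative F) ≠ 0 := by
    rw [hFdef, derivative_map, derivative_map]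
    exact (Polynomial.map_ne_zero_iff hφinj).2 hf2
  have hd2F : 2 ≤ F.natDegree := by omega
  set T : Finset (K ⊕ K × K) :=
    ((derivative (derivative F)).roots.toFinset).disjSum (MorseAux.pairSet F) with hT
  have hwit : ∀ s : Fq, ¬ IsMorse (f + Polynomial.C s * Polynomial.X) →
      ∃ z ∈ T, φ s = Sum.elim (fun b => -(derivative F).eval b)
        (fun pr => -(derivative F).eval pr.1) z := by
    intro s hbad
    have hfsd : (f + Polynomial.C s * Polynomial.X).natDegree = d := by
      rw [natDegree_add_eq_left_of_natDegree_lt, hdeg]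
      refine lt_of_le_of_lt (natDegree_C_mul_le s X) ?_
      rw [natDegree_X, hdeg]
      omega
    have hmap : (f + Polynomial.C s * Polynomial.X).map φ = F + Polynomial.C (φ s) * X := by
      rw [Polynomial.map_add, Polynomial.map_mul, Polynomial.map_C, Polynomial.map_X, hFdef]
    have hder : derivative ((f + Polynomial.C s * Polynomial.X).map φ)
        = derivative F + Polynomial.C (φ s) := by
      rw [hmap, derivative_add, derivative_C_mul, derivative_X, mul_one]
    set g : Polynomial K := derivative F + Polynomial.C (φ s) with hg
    have hgtop : g.coeff (F.natDegree - 1) = (F.natDegree : K) := by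
      rw [hg, coeff_add, MorseAux.Fprime_coeff_top F (by omega) hFmon, coeff_C,
        if_neg (by omega : F.natDegree - 1 ≠ 0), add_zero]
    have hghigh : ∀ k, F.natDegree - 1 < k → g.coeff k = 0 := by
      intro k hk
      rw [hg, coeff_add, coeff_C, if_neg (by omega : k ≠ 0), add_zero]
      exact coeff_eq_zero_of_natDegree_lt (lt_of_le_of_lt (natDegree_derivative_le F) hk)
    have hgdeg : g.natDegree = F.natDegree - 1 :=
      le_antisymm (natDegree_le_iff_coeff_eq_zero.2 hghigh)
        (le_natDegree_of_ne_zero (by rw [hgtop]; exact hdK))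
    have hg0 : g ≠ 0 := fun h => hdK (by rw [← hgtop, h, coeff_zero])
    have hgcard : Multiset.card g.roots = F.natDegree - 1 := by
      rw [← hgdeg]
      exact splits_iff_card_roots.mp (IsAlgClosed.splits g)
    rw [IsMorse] at hbad
    by_cases hA : ((Polynomial.roots (Polynomial.derivative
        ((f + Polynomial.C s * Polynomial.X).map
          (algebraMap Fq (AlgebraicClosure Fq))))).toFinset.card
        = (f + Polynomial.C s * Polynomial.X).natDegree - 1)
    · have hB : ¬ Set.InjOn (fun α => Polynomial.eval α
          ((f + Polynomial.C s * Polynomial.X).map (algebraMap Fq (AlgebraicClosure Fq))))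
          ((Polynomial.roots (Polynomial.derivative
            ((f + Polynomial.C s * Polynomial.X).map
              (algebraMap Fq (AlgebraicClosure Fq))))).toFinset :
                Set (AlgebraicClosure Fq)) := fun hinj => hbad ⟨hA, hinj⟩
      rw [Set.InjOn] at hB
      push_neg at hB
      obtain ⟨x, hx, y, hy, hfeq, hxy⟩ := hB
      have hx' : g.eval x = 0 := by
        rw [← hder]
        simp only [Finset.mem_coe, Multiset.mem_toFinset, mem_roots'] at hx
        exact hx.2
      have hy' : g.eval y = 0 := by
        rw [← hder]
        simp only [Finset.mem_coe, Multiset.mem_toFinset, mem_roots'] at hy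
        exact hy.2
      have hFx : (derivative F).eval x = -(φ s) := by
        rw [hg] at hx'
        simp only [eval_add, eval_C] at hx'
        linear_combination hx'
      have hFy : (derivative F).eval y = -(φ s) := by
        rw [hg] at hy'
        simp only [eval_add, eval_C] at hy'
        linear_combination hy'
      have hfeq' : F.eval x + φ s * x = F.eval y + φ s * y := by
        have h9 := hfeq
        rw [hmap] at h9
        simpa [eval_add, eval_mul, eval_C, eval_X] using h9
      have hGz : eval y ((MorseAux.Gpoly F).map (evalRingHom x)) = 0 := by
        rw [MorseAux.evalEval_Gpoly, hFx]
        linear_combination hfeq'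
      have hHz : eval y ((MorseAux.H1poly F).map (evalRingHom x)) = 0 :=
        MorseAux.evalEval_H1_zero F (by omega) x y hxy (by rw [hFx, hFy])
      refine ⟨Sum.inr (x, y), ?_, ?_⟩
      · rw [hT, Finset.inr_mem_disjSum]
        exact MorseAux.mem_pairSet F hd2F hFmon hdK hF2 hGz hHz
      · simp only [Sum.elim_inr]
        linear_combination hFx
    · have hnd : ¬ g.roots.Nodup := by
        intro hnd
        apply hA
        rw [hder, Multiset.toFinset_card_eq_card_iff_nodup.2 hnd, hgcard, hfsd, hFdeg]
      obtain ⟨β, hβ⟩ := not_forall.1 (fun h => hnd (Multiset.nodup_iff_count_le_one.2 h))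
      push_neg at hβ
      have hmult : 2 ≤ rootMultiplicity β g := by
        rw [← count_roots]
        omega
      have hdvd : (X - Polynomial.C β) ^ 2 ∣ g :=
        (pow_dvd_pow _ hmult).trans (pow_rootMultiplicity_dvd g β)
      obtain ⟨h, hh⟩ := hdvd
      have hgeval : g.eval β = 0 := by
        rw [hh]
        simp
      have hgdeval : (derivative g).eval β = 0 := by
        rw [hh, derivative_mul, derivative_pow]
        simp
      have hβF2 : (derivative (derivative F)).eval β = 0 := by
        have hdg : derivative g = derivative (derivative F) := by
          rw [hg, derivative_add, derivative_C, add_zero]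
        rwa [hdg] at hgdeval
      have hβt : φ s = -(derivative F).eval β := by
        rw [hg] at hgeval
        simp only [eval_add, eval_C] at hgeval
        linear_combination hgeval
      refine ⟨Sum.inl β, ?_, ?_⟩
      · rw [hT, Finset.inl_mem_disjSum, Multiset.mem_toFinset, mem_roots']
        exact ⟨hF2, hβF2⟩
      · simpa using hβt
  have hwit' : ∀ s : {s : Fq // ¬ IsMorse (f + Polynomial.C s * Polynomial.X)},
      ∃ z ∈ T, φ s.1 = Sum.elim (fun b => -(derivative F).eval b)
        (fun pr => -(derivative F).eval pr.1) z := fun s => hwit s.1 s.2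
  choose z hzT hzval using hwit'
  have hinj : Function.Injective
      (fun s : {s : Fq // ¬ IsMorse (f + Polynomial.C s * Polynomial.X)} =>
        (⟨z s, hzT s⟩ : {w // w ∈ T})) := by
    intro s1 s2 h12
    have hz : z s1 = z s2 := congrArg Subtype.val h12
    apply Subtype.ext
    apply hφinj
    rw [hzval s1, hzval s2, hz]
  have hcount := Nat.card_le_card_of_injective _ hinj
  rw [Nat.card_eq_fintype_card (α := {w // w ∈ T}), Fintype.card_coe] at hcount
  refine le_trans hcount ?_
  rw [hT, Finset.card_disjSum]
  have h1 : (derivative (derivative F)).roots.toFinset.card ≤ d := by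
    refine le_trans (Multiset.toFinset_card_le _) (le_trans (Polynomial.card_roots' _) ?_)
    have ha := natDegree_derivative_le (derivative F)
    have hb := natDegree_derivative_le F
    omega
  have h2 := MorseAux.card_pairSet_le F hd2F hFmon hdK
  rw [hFdeg] at h2
  exact Nat.add_le_add h1 h2
end
end

section
/- Let f(T) be a monic polynomial of degree d over F_q, let s, b ∈ \bar{F_q}, and suppose α ≠ β in \bar{F_q} are both roots of multiplicity at least 2 of the polynomial f(T) + sT + b. Then f̃(α, β) = f'(α) and \widetilde{f'}(α, β) = 0; that is, the point (α, β) lies on both of the plane curves defined by f̃(x,y) − f'(x) = 0 and \widetilde{f'}(x,y) = 0. -/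
open Polynomial
open scoped Classical

noncomputable section

theorem stmt13 (Fq : Type) [Field Fq] [Fintype Fq] (d : ℕ) (f : Polynomial Fq)
    (hmonic : f.Monic) (hdeg : f.natDegree = d)
    (ft ftd : MvPolynomial (Fin 2) Fq)
    (hft : (MvPolynomial.X 0 - MvPolynomial.X 1) * ft =
      Polynomial.aeval (MvPolynomial.X 0) f - Polynomial.aeval (MvPolynomial.X 1) f)
    (hftd : (MvPolynomial.X 0 - MvPolynomial.X 1) * ftd =
      Polynomial.aeval (MvPolynomial.X 0) (Polynomial.derivative f) -
        Polynomial.aeval (MvPolynomial.X 1) (Polynomial.derivative f))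
    (s b α β : AlgebraicClosure Fq) (hne : α ≠ β)
    (hα : 2 ≤ Polynomial.rootMultiplicity α
        (f.map (algebraMap Fq (AlgebraicClosure Fq)) + Polynomial.C s * Polynomial.X +
          Polynomial.C b))
    (hβ : 2 ≤ Polynomial.rootMultiplicity β
        (f.map (algebraMap Fq (AlgebraicClosure Fq)) + Polynomial.C s * Polynomial.X +
          Polynomial.C b)) :
    MvPolynomial.aeval ![α, β] ft = Polynomial.aeval α (Polynomial.derivative f) ∧
    MvPolynomial.aeval ![α, β] ftd = 0 := by
  set g : (AlgebraicClosure Fq)[X] := f.map (algebraMap Fq (AlgebraicClosure Fq)) +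
    Polynomial.C s * Polynomial.X + Polynomial.C b with hg
  have key : ∀ γ : AlgebraicClosure Fq, 2 ≤ Polynomial.rootMultiplicity γ g →
      Polynomial.aeval γ f = -(s * γ) - b ∧
      Polynomial.aeval γ (Polynomial.derivative f) = -s := by
    intro γ hγ
    have h2 : (Polynomial.X - Polynomial.C γ) ^ 2 ∣ g :=
      dvd_trans (pow_dvd_pow _ hγ) (Polynomial.pow_rootMultiplicity_dvd g γ)
    obtain ⟨h, hh⟩ := h2
    have he : g.eval γ = 0 := by rw [hh]; simp
    have hd : g.derivative.eval γ = 0 := by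
      rw [hh]
      simp [Polynomial.derivative_mul, Polynomial.derivative_pow]
    have he' : Polynomial.aeval γ f + s * γ + b = 0 := by
      simpa [hg, Polynomial.aeval_def, Polynomial.eval_map] using he
    have hdg : g.derivative = (Polynomial.derivative f).map (algebraMap Fq (AlgebraicClosure Fq)) +
        Polynomial.C s := by
      simp [hg, Polynomial.derivative_map]
    have hd' : Polynomial.aeval γ (Polynomial.derivative f) + s = 0 := by
      rw [hdg] at hd
      simpa [Polynomial.aeval_def, Polynomial.eval_map] using hd
    exact ⟨by linear_combination he', by linear_combination hd'⟩
  obtain ⟨hα1, hα2⟩ := key α hα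
  obtain ⟨hβ1, hβ2⟩ := key β hβ
  have hsub : α - β ≠ 0 := sub_ne_zero.mpr hne
  have hft' := congrArg (MvPolynomial.aeval ![α, β]) hft
  have hftd' := congrArg (MvPolynomial.aeval ![α, β]) hftd
  simp only [map_sub, map_mul, MvPolynomial.aeval_X,
    ← Polynomial.aeval_algHom_apply] at hft' hftd'
  simp only [Matrix.cons_val_zero, Matrix.cons_val_one, Matrix.head_cons] at hft' hftd'
  constructor
  · have : (α - β) * MvPolynomial.aeval ![α, β] ft =
        (α - β) * Polynomial.aeval α (Polynomial.derivative f) := by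
      rw [hft', hα1, hβ1, hα2]; ring
    exact mul_left_cancel₀ hsub this
  · have : (α - β) * MvPolynomial.aeval ![α, β] ftd = (α - β) * 0 := by
      rw [hftd', hα2, hβ2]; ring
    exact mul_left_cancel₀ hsub this
end
end

section
/- Let k be a field of characteristic 2 and let f(T) = T^{12} + T^3 ∈ k[T]. Then the polynomial x − y divides both f̃(x,y) − f'(x) and \widetilde{f'}(x,y) in k[x,y], and every common non-unit factor of f̃(x,y) − f'(x) and \widetilde{f'}(x,y) in k[x,y] is an associate of x − y; in particular these two polynomials have no common non-unit factor except powers of x − y. -/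
open Polynomial
open scoped Classical

noncomputable section

theorem stmt14 (k : Type) [Field k] [CharP k 2]
    (ft ftd : MvPolynomial (Fin 2) k)
    (hft : (MvPolynomial.X 0 - MvPolynomial.X 1) * ft =
      Polynomial.aeval (MvPolynomial.X 0) (Polynomial.X ^ 12 + Polynomial.X ^ 3 : Polynomial k) -
        Polynomial.aeval (MvPolynomial.X 1)
          (Polynomial.X ^ 12 + Polynomial.X ^ 3 : Polynomial k))
    (hftd : (MvPolynomial.X 0 - MvPolynomial.X 1) * ftd =
      Polynomial.aeval (MvPolynomial.X 0)
          (Polynomial.derivative (Polynomial.X ^ 12 + Polynomial.X ^ 3 : Polynomial k)) -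
        Polynomial.aeval (MvPolynomial.X 1)
          (Polynomial.derivative (Polynomial.X ^ 12 + Polynomial.X ^ 3 : Polynomial k))) :
    (MvPolynomial.X 0 - MvPolynomial.X 1) ∣
      (ft - Polynomial.aeval (MvPolynomial.X 0)
        (Polynomial.derivative (Polynomial.X ^ 12 + Polynomial.X ^ 3 : Polynomial k))) ∧
    (MvPolynomial.X 0 - MvPolynomial.X 1) ∣ ftd ∧
    (∀ p : MvPolynomial (Fin 2) k, ¬ IsUnit p →
      p ∣ (ft - Polynomial.aeval (MvPolynomial.X 0)
        (Polynomial.derivative (Polynomial.X ^ 12 + Polynomial.X ^ 3 : Polynomial k))) →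
      p ∣ ftd →
      Associated p (MvPolynomial.X 0 - MvPolynomial.X 1)) ∧
    (∀ p : MvPolynomial (Fin 2) k, ¬ IsUnit p →
      p ∣ (ft - Polynomial.aeval (MvPolynomial.X 0)
        (Polynomial.derivative (Polynomial.X ^ 12 + Polynomial.X ^ 3 : Polynomial k))) →
      p ∣ ftd →
      ∃ n : ℕ, Associated p ((MvPolynomial.X 0 - MvPolynomial.X 1) ^ n)) := by
  set x : MvPolynomial (Fin 2) k := MvPolynomial.X 0 with hx
  set y : MvPolynomial (Fin 2) k := MvPolynomial.X 1 with hy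
  have h2k : (2 : k) = 0 := CharP.cast_eq_zero k 2
  have h2 : (2 : MvPolynomial (Fin 2) k) = 0 := by
    rw [show (2 : MvPolynomial (Fin 2) k) = MvPolynomial.C (2 : k) by
      rw [map_ofNat], h2k, map_zero]
  have hd : Polynomial.derivative (Polynomial.X ^ 12 + Polynomial.X ^ 3 : Polynomial k)
      = Polynomial.X ^ 2 := by
    have h12 : ((12 : ℕ) : k) = 0 := by
      rw [show ((12 : ℕ) : k) = (2 : k) * 6 by push_cast; ring, h2k, zero_mul]
    have h3 : ((3 : ℕ) : k) = 1 := by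
      rw [show ((3 : ℕ) : k) = (2 : k) + 1 by push_cast; ring, h2k, zero_add]
    simp only [map_add, Polynomial.derivative_X_pow, h12, h3, map_zero, map_one,
      zero_mul, one_mul, zero_add]
  have hDne : (x - y) ≠ 0 := by
    rw [sub_ne_zero, hx, hy]
    intro h
    exact (by decide : (0 : Fin 2) ≠ 1) (MvPolynomial.X_injective h)
  -- simplify hftd
  rw [hd] at hftd
  simp only [map_pow, Polynomial.aeval_X] at hftd
  have hftd' : ftd = x - y := by
    apply mul_left_cancel₀ hDne
    rw [hftd]
    linear_combination (x * y - y ^ 2) * h2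
  -- simplify hft
  simp only [map_add, map_pow, Polynomial.aeval_X] at hft
  -- ft - x^2 = (x - y) * g
  set g : MvPolynomial (Fin 2) k :=
    x^10 + x^8*y^2 + x^6*y^4 + x^4*y^6 + x^2*y^8 + y^10 + y with hg
  have hft2 : ft - x ^ 2 = (x - y) * g := by
    apply mul_left_cancel₀ hDne
    linear_combination hft + (x^11*y - x^10*y^2 + x^9*y^3 - x^8*y^4 + x^7*y^5 - x^6*y^6
      + x^5*y^7 - x^4*y^8 + x^3*y^9 - x^2*y^10 + x*y^11 - y^12 + x*y^2 - y^3) * h2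
  have hgoalA : ft - Polynomial.aeval (MvPolynomial.X 0)
      (Polynomial.derivative (Polynomial.X ^ 12 + Polynomial.X ^ 3 : Polynomial k))
      = (x - y) * g := by
    rw [hd]; simp only [map_pow, Polynomial.aeval_X]; exact hft2
  have hprime : Prime (x - y) := by
    rw [← MulEquiv.prime_iff (MvPolynomial.finSuccEquiv k 1).toMulEquiv]
    have : (MvPolynomial.finSuccEquiv k 1).toMulEquiv (x - y)
        = Polynomial.X - Polynomial.C (MvPolynomial.X 0) := by
      show (MvPolynomial.finSuccEquiv k 1) (x - y) = _
      rw [map_sub, hx, hy, MvPolynomial.finSuccEquiv_X_zero,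
        show (1 : Fin 2) = Fin.succ 0 from rfl, MvPolynomial.finSuccEquiv_X_succ]
    rw [this]
    exact Polynomial.prime_X_sub_C _
  have key : ∀ p : MvPolynomial (Fin 2) k, ¬ IsUnit p → p ∣ ftd →
      Associated p (x - y) := by
    intro p hp hdvd
    rw [hftd'] at hdvd
    obtain ⟨c, hc⟩ := hdvd
    rcases hprime.irreducible.isUnit_or_isUnit hc with h | h
    · exact absurd h hp
    · rw [hc]
      exact (associated_mul_unit_left p c h).symm
  refine ⟨⟨g, hgoalA⟩, ⟨1, by rw [hftd', mul_one]⟩, ?_, ?_⟩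
  · intro p hp _ hdvd
    exact key p hp hdvd
  · intro p hp _ hdvd
    exact ⟨1, by simpa using key p hp hdvd⟩
end
end

section
/- Let k be a field of characteristic 2 and let f(T) = T^7 ∈ k[T]. Then the polynomial x² + xy + y² is a common factor of f̃(x,y) − f'(x) and \widetilde{f'}(x,y) in k[x,y], and x² + xy + y² is not an associate of any power of x − y; in particular, f̃(x,y) − f'(x) and \widetilde{f'}(x,y) have a common non-unit factor that is not a power of x − y. -/
open Polynomial
open scoped Classical

noncomputable section

theorem stmt15 (k : Type) [Field k] [CharP k 2]
    (ft ftd : MvPolynomial (Fin 2) k)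
    (hft : (MvPolynomial.X 0 - MvPolynomial.X 1) * ft =
      Polynomial.aeval (MvPolynomial.X 0) (Polynomial.X ^ 7 : Polynomial k) -
        Polynomial.aeval (MvPolynomial.X 1) (Polynomial.X ^ 7 : Polynomial k))
    (hftd : (MvPolynomial.X 0 - MvPolynomial.X 1) * ftd =
      Polynomial.aeval (MvPolynomial.X 0)
          (Polynomial.derivative (Polynomial.X ^ 7 : Polynomial k)) -
        Polynomial.aeval (MvPolynomial.X 1)
          (Polynomial.derivative (Polynomial.X ^ 7 : Polynomial k))) :
    (MvPolynomial.X 0 ^ 2 + MvPolynomial.X 0 * MvPolynomial.X 1 + MvPolynomial.X 1 ^ 2 :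
        MvPolynomial (Fin 2) k) ∣
      (ft - Polynomial.aeval (MvPolynomial.X 0)
        (Polynomial.derivative (Polynomial.X ^ 7 : Polynomial k))) ∧
    (MvPolynomial.X 0 ^ 2 + MvPolynomial.X 0 * MvPolynomial.X 1 + MvPolynomial.X 1 ^ 2 :
        MvPolynomial (Fin 2) k) ∣ ftd ∧
    (∀ n : ℕ, ¬ Associated
      (MvPolynomial.X 0 ^ 2 + MvPolynomial.X 0 * MvPolynomial.X 1 + MvPolynomial.X 1 ^ 2 :
        MvPolynomial (Fin 2) k)
      ((MvPolynomial.X 0 - MvPolynomial.X 1) ^ n)) ∧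
    (∃ p : MvPolynomial (Fin 2) k, ¬ IsUnit p ∧
      p ∣ (ft - Polynomial.aeval (MvPolynomial.X 0)
        (Polynomial.derivative (Polynomial.X ^ 7 : Polynomial k))) ∧
      p ∣ ftd ∧
      ∀ n : ℕ, ¬ Associated p ((MvPolynomial.X 0 - MvPolynomial.X 1) ^ n)) := by
  set x : MvPolynomial (Fin 2) k := MvPolynomial.X 0 with hx
  set y : MvPolynomial (Fin 2) k := MvPolynomial.X 1 with hy
  set q : MvPolynomial (Fin 2) k := x ^ 2 + x * y + y ^ 2 with hq
  have h2 : (2 : MvPolynomial (Fin 2) k) = 0 := by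
    have := CharP.cast_eq_zero (MvPolynomial (Fin 2) k) 2
    simpa using this
  have h2k : (2 : k) = 0 := by
    have := CharP.cast_eq_zero k 2
    simpa using this
  have hd : x - y ≠ 0 := by
    rw [sub_ne_zero]
    intro h
    exact (by decide : (0 : Fin 2) ≠ 1) (MvPolynomial.X_injective h)
  simp only [map_pow, Polynomial.aeval_X] at hft
  simp only [Polynomial.derivative_X_pow, map_mul, map_pow, Polynomial.aeval_X,
    Polynomial.aeval_C] at hftd ⊢
  have h7 : (algebraMap k (MvPolynomial (Fin 2) k)) ((7 : ℕ) : k) = 7 := by push_cast; simp; exact map_ofNat MvPolynomial.C 7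
  rw [h7] at hftd ⊢
  have key1 : ft - 7 * x ^ (7 - 1) = q * (y * (x - y) * q) := by
    apply mul_left_cancel₀ hd
    linear_combination hft + (-3 * x ^ 7 - y ^ 7 + 3 * x ^ 6 * y + x ^ 3 * y ^ 4) * h2
  have key2 : ftd = q * ((x - y) * q) := by
    apply mul_left_cancel₀ hd
    linear_combination hftd + (3 * x ^ 6 - 4 * y ^ 6 + x ^ 3 * y ^ 3) * h2
  have g3 : ∀ n : ℕ, ¬ Associated q ((x - y) ^ n) := by
    intro n ⟨u, hu⟩
    match n with
    | 0 =>
      rw [pow_zero] at hu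
      have hqu : IsUnit q := IsUnit.of_mul_eq_one _ hu
      have h0 : IsUnit ((MvPolynomial.eval (fun _ => (0 : k))) q) :=
        hqu.map (MvPolynomial.eval (fun _ => (0 : k)))
      rw [hq, hx, hy] at h0
      simp only [map_add, map_mul, map_pow, MvPolynomial.eval_X] at h0
      norm_num at h0
    | n + 1 =>
      have e1 := congrArg (MvPolynomial.eval (fun _ => (1 : k))) hu
      rw [map_mul, map_pow] at e1
      have eq_q : MvPolynomial.eval (fun _ => (1 : k)) q = 1 := by
        rw [hq, hx, hy]
        simp only [map_add, map_mul, map_pow, MvPolynomial.eval_X]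
        linear_combination h2k
      have ed : MvPolynomial.eval (fun _ => (1 : k)) (x - y) = 0 := by
        rw [hx, hy]; simp
      rw [eq_q, ed, one_mul, zero_pow (Nat.succ_ne_zero n)] at e1
      exact ((u.isUnit.map (MvPolynomial.eval (fun _ => (1 : k)))).ne_zero) e1
  refine ⟨⟨y * (x - y) * q, key1⟩, ⟨(x - y) * q, key2⟩, g3, q, ?_, ⟨y * (x - y) * q, key1⟩,
    ⟨(x - y) * q, key2⟩, g3⟩
  intro h
  exact g3 0 (by rw [pow_zero]; exact associated_one_iff_isUnit.mpr h)
end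
end
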